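/- Let P_1 be a nonzero homogeneous polynomial of degree 1 on ℂ^d and let P_0 ∈ ℂ be a constant. Then (P_1 - P_0, P_1*(D)) is a Fischer pair for the space of entire functions on ℂ^d: for every entire function f there exist unique entire functions q, r with f = (P_1 - P_0) q + r and P_1*(D) r = 0. -/

import Mathlib

open Metric Complex Topology Filter intervalIntegral MeasureTheory

lemma aux_fderiv_bound {d : ℕ} {f : (Fin d → ℂ) → ℂ} (hf : Differentiable ℂ f)
    (z₀ : Fin d → ℂ) (ρ : ℝ) :
    ∃ C : ℝ, 0 ≤ C ∧ ∀ z ∈ closedBall z₀ ρ, ‖fderiv ℂ f z‖ ≤ C := by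
  obtain ⟨M, hM⟩ := (isCompact_closedBall z₀ (ρ + 1)).exists_bound_of_continuousOn
    hf.continuous.continuousOn
  refine ⟨max M 0, le_max_right _ _, fun z hz => ?_⟩
  apply ContinuousLinearMap.opNorm_le_bound _ (le_max_right M 0)
  intro u
  rcases eq_or_ne u 0 with rfl | hu
  · simp
  have hu' : (0:ℝ) < ‖u‖ := norm_pos_iff.2 hu
  set φ : ℂ → ℂ := fun ζ => f (z + ζ • u) with hφ
  have hφd : Differentiable ℂ φ := hf.comp ((differentiable_id.smul_const u).const_add z)
  have hder : HasDerivAt φ (fderiv ℂ f z u) 0 := by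
    have h1 : HasDerivAt (fun ζ : ℂ => z + ζ • u) u 0 := by
      simpa using ((hasDerivAt_id (0:ℂ)).smul_const u).const_add z
    have h0 : z + (0:ℂ) • u = z := by simp
    have h2 : HasFDerivAt f (fderiv ℂ f z) (z + (0:ℂ) • u) := by
      rw [h0]; exact hf.differentiableAt.hasFDerivAt
    exact h2.comp_hasDerivAt (0:ℂ) h1
  have hb : ∀ ζ ∈ sphere (0:ℂ) (‖u‖⁻¹), ‖φ ζ‖ ≤ max M 0 := by
    intro ζ hζ
    have hζn : ‖ζ‖ = ‖u‖⁻¹ := by simpa using hζ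
    refine le_max_of_le_left (hM _ ?_)
    have hle : ‖z + ζ • u - z₀‖ ≤ ‖z - z₀‖ + ‖ζ • u‖ := by
      have h5 : z + ζ • u - z₀ = (z - z₀) + ζ • u := by abel
      rw [h5]; exact norm_add_le _ _
    rw [mem_closedBall, dist_eq_norm]
    have h3 : ‖ζ • u‖ = 1 := by rw [norm_smul, hζn]; field_simp
    have h4 : ‖z - z₀‖ ≤ ρ := by rw [← dist_eq_norm]; exact hz
    linarith
  have hcau := Complex.norm_deriv_le_of_forall_mem_sphere_norm_le
    (by positivity : (0:ℝ) < ‖u‖⁻¹) hφd.diffContOnCl hb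
  rw [hder.deriv] at hcau
  calc ‖fderiv ℂ f z u‖ ≤ max M 0 / ‖u‖⁻¹ := hcau
    _ = max M 0 * ‖u‖ := by field_simp

lemma aux_lip {d : ℕ} {f : (Fin d → ℂ) → ℂ} (hf : Differentiable ℂ f)
    (z₀ : Fin d → ℂ) (ρ : ℝ) :
    ∃ C : ℝ, 0 ≤ C ∧ ∀ x ∈ closedBall z₀ ρ, ∀ y ∈ closedBall z₀ ρ,
      ‖f x - f y‖ ≤ C * ‖x - y‖ := by
  obtain ⟨C, hC0, hC⟩ := aux_fderiv_bound hf z₀ ρ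
  exact ⟨C, hC0, fun x hx y hy => (convex_closedBall z₀ ρ).norm_image_sub_le_of_norm_fderiv_le
    (fun z _ => hf z) hC hy hx⟩

set_option maxHeartbeats 1000000 in
lemma aux_qdiff {f : (Fin d → ℂ) → ℂ} (hf : Differentiable ℂ f)
    (v b0 : Fin d → ℂ) (T0 : (Fin d → ℂ) →L[ℂ] ℂ)
    (A : (Fin d → ℂ) →L[ℂ] (Fin d → ℂ)) (s0 : ℂ) :
    Differentiable ℂ (fun z => dslope (fun ζ : ℂ => f ((A z + b0) + ζ • v)) 0 (T0 z - s0)) := by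
  intro z₀
  set pr : (Fin d → ℂ) → (Fin d → ℂ) := fun z => A z + b0 with hprdef
  set t0 : (Fin d → ℂ) → ℂ := fun z => T0 z - s0 with ht0def
  have hprA : ∀ z, HasFDerivAt pr A z := fun z => A.hasFDerivAt.add_const b0
  have ht0T : ∀ z, HasFDerivAt t0 (T0 : (Fin d → ℂ) →L[ℂ] ℂ) z :=
    fun z => T0.hasFDerivAt.sub_const s0
  set R : ℝ := ‖t0 z₀‖ + 1 with hRdef
  have hR : (0:ℝ) < R := by positivity
  set ρ : ℝ := ‖A‖ * (‖z₀‖ + 1) + ‖b0‖ + R * ‖v‖ with hρdef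
  obtain ⟨Cf, hCf0, hCf⟩ := aux_lip hf 0 ρ
  have hmem : ∀ z ∈ closedBall z₀ 1, ∀ ζ : ℂ, ‖ζ‖ ≤ R →
      pr z + ζ • v ∈ closedBall (0 : Fin d → ℂ) ρ := by
    intro z hz ζ hζ
    rw [mem_closedBall, dist_zero_right]
    have h1 : ‖z‖ ≤ ‖z₀‖ + 1 := by
      have h2 := mem_closedBall_iff_norm.1 hz
      calc ‖z‖ = ‖(z - z₀) + z₀‖ := by rw [sub_add_cancel]
        _ ≤ ‖z - z₀‖ + ‖z₀‖ := norm_add_le _ _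
        _ ≤ ‖z₀‖ + 1 := by linarith
    have h3 : ‖A z‖ ≤ ‖A‖ * (‖z₀‖ + 1) :=
      (A.le_opNorm z).trans (by nlinarith [norm_nonneg A])
    have h4 : ‖ζ • v‖ ≤ R * ‖v‖ := by
      rw [norm_smul]
      exact mul_le_mul_of_nonneg_right hζ (norm_nonneg v)
    calc ‖pr z + ζ • v‖ ≤ ‖A z + b0‖ + ‖ζ • v‖ := norm_add_le _ _
      _ ≤ (‖A z‖ + ‖b0‖) + ‖ζ • v‖ := by linarith [norm_add_le (A z) b0]
      _ ≤ ρ := by rw [hρdef]; linarith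
  set ε : ℝ := min 1 (1 / (2 * (‖T0‖ + 1))) with hεdef
  have hε : 0 < ε := by
    apply lt_min one_pos
    positivity
  have hε1 : ε ≤ 1 := min_le_left _ _
  have hT0lip : ∀ z z' : Fin d → ℂ, ‖t0 z - t0 z'‖ ≤ ‖T0‖ * ‖z - z'‖ := by
    intro z z'
    have : t0 z - t0 z' = T0 (z - z') := by simp [ht0def, map_sub]
    rw [this]
    exact T0.le_opNorm _
  have hhalf : ∀ z ∈ ball z₀ ε, ‖t0 z - t0 z₀‖ ≤ 1/2 := by
    intro z hz
    have h1 : ‖z - z₀‖ ≤ ε := (mem_ball_iff_norm.1 hz).le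
    have h2 : ‖t0 z - t0 z₀‖ ≤ ‖T0‖ * ε :=
      (hT0lip z z₀).trans (mul_le_mul_of_nonneg_left h1 (norm_nonneg _))
    have h3 : ‖T0‖ * ε ≤ ‖T0‖ * (1 / (2 * (‖T0‖ + 1))) :=
      mul_le_mul_of_nonneg_left (min_le_right _ _) (norm_nonneg _)
    have h4 : ‖T0‖ * (1 / (2 * (‖T0‖ + 1))) ≤ 1/2 := by
      rw [mul_one_div, div_le_div_iff₀ (by positivity) (by norm_num)]
      nlinarith [norm_nonneg T0]
    linarith
  have hζt : ∀ z ∈ ball z₀ ε, ∀ θ : ℝ, (1:ℝ)/2 ≤ ‖circleMap 0 R θ - t0 z‖ := by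
    intro z hz θ
    have h1 : ‖circleMap 0 R θ‖ = R := by
      have := norm_circleMap_zero R θ
      simpa [abs_of_pos hR] using this
    have h2 : ‖t0 z‖ ≤ ‖t0 z₀‖ + 1/2 := by
      calc ‖t0 z‖ = ‖t0 z₀ + (t0 z - t0 z₀)‖ := by ring_nf
        _ ≤ ‖t0 z₀‖ + ‖t0 z - t0 z₀‖ := norm_add_le _ _
        _ ≤ ‖t0 z₀‖ + 1/2 := by linarith [hhalf z hz]
    calc (1:ℝ)/2 = R - (‖t0 z₀‖ + 1/2) := by rw [hRdef]; ring
      _ ≤ ‖circleMap 0 R θ‖ - ‖t0 z‖ := by linarith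
      _ ≤ ‖circleMap 0 R θ - t0 z‖ := by
          linarith [norm_sub_norm_le (circleMap 0 R θ) (t0 z)]
  have hζne : ∀ z ∈ ball z₀ ε, ∀ θ : ℝ, circleMap 0 R θ - t0 z ≠ 0 := by
    intro z hz θ h0
    have := hζt z hz θ
    rw [h0, norm_zero] at this
    linarith
  have hz₀mem : z₀ ∈ ball z₀ ε := mem_ball_self hε
  -- the integrand and its derivative
  set F : (Fin d → ℂ) → ℝ → ℂ := fun z θ =>
    I * ((circleMap 0 R θ - t0 z)⁻¹ * (f (pr z + circleMap 0 R θ • v) - f (pr z))) with hFdef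
  set F' : ℝ → (Fin d → ℂ) →L[ℂ] ℂ := fun θ =>
    I • (((circleMap 0 R θ - t0 z₀)⁻¹ •
            ((fderiv ℂ f (pr z₀ + circleMap 0 R θ • v)).comp A - (fderiv ℂ f (pr z₀)).comp A))
      + ((f (pr z₀ + circleMap 0 R θ • v) - f (pr z₀)) •
            ((-((circleMap 0 R θ - t0 z₀) ^ 2)⁻¹) • (-(T0 : (Fin d → ℂ) →L[ℂ] ℂ))))) with hF'def
  -- measurability of F'
  have hmθ : Continuous fun θ : ℝ => circleMap 0 R θ := continuous_circleMap 0 R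
  have hm1 : Continuous fun θ : ℝ => pr z₀ + circleMap 0 R θ • v :=
    continuous_const.add (hmθ.smul continuous_const)
  have hsm1 : StronglyMeasurable fun θ : ℝ => fderiv ℂ f (pr z₀ + circleMap 0 R θ • v) :=
    ((measurable_fderiv ℂ f).comp hm1.measurable).stronglyMeasurable
  have hcompA : Continuous fun T : (Fin d → ℂ) →L[ℂ] ℂ => T.comp A :=
    ((ContinuousLinearMap.compL ℂ (Fin d → ℂ) (Fin d → ℂ) ℂ).flip A).continuous
  have hsm2 : StronglyMeasurable fun θ : ℝ =>
      (fderiv ℂ f (pr z₀ + circleMap 0 R θ • v)).comp A :=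
    hcompA.comp_stronglyMeasurable hsm1
  have hc3 : Continuous fun θ : ℝ => (circleMap 0 R θ - t0 z₀)⁻¹ :=
    ((hmθ.sub continuous_const).inv₀ (fun θ => hζne z₀ hz₀mem θ))
  have hc4 : Continuous fun θ : ℝ => f (pr z₀ + circleMap 0 R θ • v) - f (pr z₀) :=
    (hf.continuous.comp hm1).sub continuous_const
  have hc5 : Continuous fun θ : ℝ => -((circleMap 0 R θ - t0 z₀) ^ 2)⁻¹ := by
    apply Continuous.neg
    apply Continuous.inv₀ ((hmθ.sub continuous_const).pow 2)
    intro θ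
    exact pow_ne_zero 2 (hζne z₀ hz₀mem θ)
  have hF'meas : AEStronglyMeasurable F' (volume.restrict (Set.uIoc (0:ℝ) (2 * Real.pi))) := by
    apply StronglyMeasurable.aestronglyMeasurable
    have inner1 : StronglyMeasurable fun θ : ℝ => (circleMap 0 R θ - t0 z₀)⁻¹ •
        ((fderiv ℂ f (pr z₀ + circleMap 0 R θ • v)).comp A - (fderiv ℂ f (pr z₀)).comp A) :=
      hc3.stronglyMeasurable.smul (hsm2.sub stronglyMeasurable_const)
    have inner2 : StronglyMeasurable fun θ : ℝ => (f (pr z₀ + circleMap 0 R θ • v) - f (pr z₀)) •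
        ((-((circleMap 0 R θ - t0 z₀) ^ 2)⁻¹) • (-(T0 : (Fin d → ℂ) →L[ℂ] ℂ))) :=
      hc4.stronglyMeasurable.smul ((hc5.stronglyMeasurable).smul stronglyMeasurable_const)
    exact (stronglyMeasurable_const (b := I)).smul (inner1.add inner2)
  have ht0R : ∀ z ∈ ball z₀ ε, ‖t0 z‖ < R := by
    intro z hz
    have h2 : ‖t0 z‖ ≤ ‖t0 z₀‖ + 1/2 := by
      calc ‖t0 z‖ = ‖t0 z₀ + (t0 z - t0 z₀)‖ := by ring_nf
        _ ≤ ‖t0 z₀‖ + ‖t0 z - t0 z₀‖ := norm_add_le _ _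
        _ ≤ ‖t0 z₀‖ + 1/2 := by linarith [hhalf z hz]
    rw [hRdef]; linarith
  -- Lipschitz estimate
  set CL : ℝ := 2 * (2 * Cf * ‖A‖) + (4 * ‖T0‖) * (Cf * (R * ‖v‖)) with hCLdef
  have hlip : ∀ θ : ℝ, LipschitzOnWith (Real.nnabs CL) (fun z => F z θ) (ball z₀ ε) := by
    intro θ
    rw [lipschitzOnWith_iff_norm_sub_le]
    intro z hz z' hz'
    have hz1 : z ∈ closedBall z₀ 1 := (closedBall_subset_closedBall hε1) (ball_subset_closedBall hz)
    have hz'1 : z' ∈ closedBall z₀ 1 :=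
      (closedBall_subset_closedBall hε1) (ball_subset_closedBall hz')
    have hζR : ‖circleMap 0 R θ‖ = R := by
      simpa [abs_of_pos hR] using norm_circleMap_zero R θ
    have hane : circleMap 0 R θ - t0 z ≠ 0 := hζne z hz θ
    have hane' : circleMap 0 R θ - t0 z' ≠ 0 := hζne z' hz' θ
    have hainv : ∀ w ∈ ball z₀ ε, ‖(circleMap 0 R θ - t0 w)⁻¹‖ ≤ 2 := by
      intro w hw
      rw [norm_inv]
      have hge : (2:ℝ)⁻¹ ≤ ‖circleMap 0 R θ - t0 w‖ := by
        have := hζt w hw θ; linarith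
      calc ‖circleMap 0 R θ - t0 w‖⁻¹ ≤ ((2:ℝ)⁻¹)⁻¹ :=
            inv_anti₀ (by norm_num) hge
        _ = 2 := by norm_num
    have hmem0 : ∀ w ∈ closedBall z₀ 1, (A w + b0 : Fin d → ℂ) ∈ closedBall (0 : Fin d → ℂ) ρ := by
      intro w hw
      have := hmem w hw 0 (by simpa using hR.le)
      simpa using this
    have hprdiff : ‖(A z + b0 : Fin d → ℂ) - (A z' + b0)‖ ≤ ‖A‖ * ‖z - z'‖ := by
      have he : (A z + b0 : Fin d → ℂ) - (A z' + b0) = A (z - z') := by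
        rw [map_sub]; abel
      rw [he]; exact A.le_opNorm _
    have hw'bd : ‖f (pr z' + circleMap 0 R θ • v) - f (pr z')‖ ≤ Cf * (R * ‖v‖) := by
      have h1 := hCf _ (hmem z' hz'1 _ hζR.le) _ (hmem0 z' hz'1)
      have h2 : ‖(pr z' + circleMap 0 R θ • v) - pr z'‖ = R * ‖v‖ := by
        rw [add_sub_cancel_left, norm_smul, hζR]
      rw [h2] at h1
      exact h1
    have hwdiff : ‖(f (pr z + circleMap 0 R θ • v) - f (pr z))
        - (f (pr z' + circleMap 0 R θ • v) - f (pr z'))‖ ≤ 2 * Cf * ‖A‖ * ‖z - z'‖ := by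
      have e1 : (f (pr z + circleMap 0 R θ • v) - f (pr z))
          - (f (pr z' + circleMap 0 R θ • v) - f (pr z'))
          = (f (pr z + circleMap 0 R θ • v) - f (pr z' + circleMap 0 R θ • v))
            - (f (pr z) - f (pr z')) := by ring
      have hb1 : ‖f (pr z + circleMap 0 R θ • v) - f (pr z' + circleMap 0 R θ • v)‖
          ≤ Cf * (‖A‖ * ‖z - z'‖) := by
        have h1 := hCf _ (hmem z hz1 _ hζR.le) _ (hmem z' hz'1 _ hζR.le)
        have h2 : (pr z + circleMap 0 R θ • v) - (pr z' + circleMap 0 R θ • v)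
            = (A z + b0) - (A z' + b0) := by simp only [hprdef]; abel
        rw [h2] at h1
        exact h1.trans (mul_le_mul_of_nonneg_left hprdiff hCf0)
      have hb2 : ‖f (pr z) - f (pr z')‖ ≤ Cf * (‖A‖ * ‖z - z'‖) := by
        have h1 := hCf _ (hmem0 z hz1) _ (hmem0 z' hz'1)
        exact h1.trans (mul_le_mul_of_nonneg_left hprdiff hCf0)
      calc ‖_‖ = ‖(f (pr z + circleMap 0 R θ • v) - f (pr z' + circleMap 0 R θ • v))
            - (f (pr z) - f (pr z'))‖ := by rw [e1]
        _ ≤ ‖f (pr z + circleMap 0 R θ • v) - f (pr z' + circleMap 0 R θ • v)‖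
            + ‖f (pr z) - f (pr z')‖ := norm_sub_le _ _
        _ ≤ 2 * Cf * ‖A‖ * ‖z - z'‖ := by linarith
    have hadiff : ‖(circleMap 0 R θ - t0 z)⁻¹ - (circleMap 0 R θ - t0 z')⁻¹‖
        ≤ 4 * ‖T0‖ * ‖z - z'‖ := by
      have e1 : (circleMap 0 R θ - t0 z)⁻¹ - (circleMap 0 R θ - t0 z')⁻¹
          = (t0 z - t0 z') * ((circleMap 0 R θ - t0 z)⁻¹ * (circleMap 0 R θ - t0 z')⁻¹) := by
        field_simp
        ring
      rw [e1, norm_mul, norm_mul]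
      have h1 := hT0lip z z'
      have h2 := hainv z hz
      have h3 := hainv z' hz'
      have hn2 : (0:ℝ) ≤ ‖(circleMap 0 R θ - t0 z')⁻¹‖ := norm_nonneg _
      have hn3 : (0:ℝ) ≤ ‖t0 z - t0 z'‖ := norm_nonneg _
      have h4 : ‖(circleMap 0 R θ - t0 z)⁻¹‖ * ‖(circleMap 0 R θ - t0 z')⁻¹‖ ≤ 2 * 2 :=
        mul_le_mul h2 h3 hn2 (by norm_num)
      calc ‖t0 z - t0 z'‖ * (‖(circleMap 0 R θ - t0 z)⁻¹‖ * ‖(circleMap 0 R θ - t0 z')⁻¹‖)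
          ≤ ‖t0 z - t0 z'‖ * (2 * 2) := mul_le_mul_of_nonneg_left h4 hn3
        _ ≤ (‖T0‖ * ‖z - z'‖) * (2 * 2) := by
            apply mul_le_mul_of_nonneg_right h1; norm_num
        _ = 4 * ‖T0‖ * ‖z - z'‖ := by ring
    -- combine
    have e2 : F z θ - F z' θ
        = I * ((circleMap 0 R θ - t0 z)⁻¹
            * ((f (pr z + circleMap 0 R θ • v) - f (pr z))
              - (f (pr z' + circleMap 0 R θ • v) - f (pr z')))
          + ((circleMap 0 R θ - t0 z)⁻¹ - (circleMap 0 R θ - t0 z')⁻¹)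
            * (f (pr z' + circleMap 0 R θ • v) - f (pr z'))) := by
      simp only [hFdef]
      ring
    rw [e2, norm_mul, Complex.norm_I, one_mul]
    have h2 := hainv z hz
    have hcl : ‖(circleMap 0 R θ - t0 z)⁻¹
            * ((f (pr z + circleMap 0 R θ • v) - f (pr z))
              - (f (pr z' + circleMap 0 R θ • v) - f (pr z')))
          + ((circleMap 0 R θ - t0 z)⁻¹ - (circleMap 0 R θ - t0 z')⁻¹)
            * (f (pr z' + circleMap 0 R θ • v) - f (pr z'))‖ ≤ CL * ‖z - z'‖ := by
      calc _ ≤ ‖(circleMap 0 R θ - t0 z)⁻¹‖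
            * ‖(f (pr z + circleMap 0 R θ • v) - f (pr z))
              - (f (pr z' + circleMap 0 R θ • v) - f (pr z'))‖
          + ‖(circleMap 0 R θ - t0 z)⁻¹ - (circleMap 0 R θ - t0 z')⁻¹‖
            * ‖f (pr z' + circleMap 0 R θ • v) - f (pr z')‖ := by
            refine (norm_add_le _ _).trans ?_
            rw [norm_mul, norm_mul]
        _ ≤ CL * ‖z - z'‖ := by
            have hn5 : (0:ℝ) ≤ ‖f (pr z' + circleMap 0 R θ • v) - f (pr z')‖ := norm_nonneg _
            have hn8 : (0:ℝ) ≤ ‖(f (pr z + circleMap 0 R θ • v) - f (pr z))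
              - (f (pr z' + circleMap 0 R θ • v) - f (pr z'))‖ := norm_nonneg _
            have b1 : ‖(circleMap 0 R θ - t0 z)⁻¹‖
                * ‖(f (pr z + circleMap 0 R θ • v) - f (pr z))
                  - (f (pr z' + circleMap 0 R θ • v) - f (pr z'))‖
                ≤ 2 * (2 * Cf * ‖A‖ * ‖z - z'‖) := mul_le_mul h2 hwdiff hn8 (by norm_num)
            have b2 : ‖(circleMap 0 R θ - t0 z)⁻¹ - (circleMap 0 R θ - t0 z')⁻¹‖
                * ‖f (pr z' + circleMap 0 R θ • v) - f (pr z')‖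
                ≤ (4 * ‖T0‖ * ‖z - z'‖) * (Cf * (R * ‖v‖)) :=
              mul_le_mul hadiff hw'bd hn5 (by positivity)
            calc _ ≤ 2 * (2 * Cf * ‖A‖ * ‖z - z'‖) + (4 * ‖T0‖ * ‖z - z'‖) * (Cf * (R * ‖v‖)) :=
                  add_le_add b1 b2
              _ = CL * ‖z - z'‖ := by rw [hCLdef]; ring
    refine hcl.trans ?_
    have : CL ≤ (Real.nnabs CL : ℝ) := by
      rw [Real.coe_nnabs]; exact le_abs_self CL
    exact mul_le_mul_of_nonneg_right this (norm_nonneg _)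
  -- pointwise differentiability of the integrand at z₀
  have hdiff : ∀ θ : ℝ, HasFDerivAt (fun z => F z θ) (F' θ) z₀ := by
    intro θ
    have hane : circleMap 0 R θ - t0 z₀ ≠ 0 := hζne z₀ hz₀mem θ
    have hu : HasFDerivAt (fun z => (circleMap 0 R θ - t0 z)⁻¹)
        ((-((circleMap 0 R θ - t0 z₀) ^ 2)⁻¹) • (-(T0 : (Fin d → ℂ) →L[ℂ] ℂ))) z₀ :=
      (hasDerivAt_inv hane).comp_hasFDerivAt z₀ ((ht0T z₀).const_sub (circleMap 0 R θ))
    have hw1 : HasFDerivAt (fun z => f (pr z + circleMap 0 R θ • v))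
        ((fderiv ℂ f (pr z₀ + circleMap 0 R θ • v)).comp A) z₀ :=
      (hf _).hasFDerivAt.comp z₀ ((hprA z₀).add_const _)
    have hw2 : HasFDerivAt (fun z => f (pr z))
        ((fderiv ℂ f (pr z₀)).comp A) z₀ := (hf _).hasFDerivAt.comp z₀ (hprA z₀)
    exact (hu.mul (hw1.sub hw2)).const_mul I
  have hFmeas : ∀ᶠ z in 𝓝 z₀,
      AEStronglyMeasurable (F z) (volume.restrict (Set.uIoc (0:ℝ) (2 * Real.pi))) := by
    filter_upwards [ball_mem_nhds z₀ hε] with z hz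
    apply Continuous.aestronglyMeasurable
    exact continuous_const.mul (((hmθ.sub continuous_const).inv₀ (fun θ => hζne z hz θ)).mul
      ((hf.continuous.comp (continuous_const.add (hmθ.smul continuous_const))).sub
        continuous_const))
  have hFint : IntervalIntegrable (F z₀) volume 0 (2 * Real.pi) := by
    apply Continuous.intervalIntegrable
    exact continuous_const.mul (((hmθ.sub continuous_const).inv₀ (fun θ => hζne z₀ hz₀mem θ)).mul
      ((hf.continuous.comp (continuous_const.add (hmθ.smul continuous_const))).sub
        continuous_const))
  obtain ⟨-, hK⟩ := intervalIntegral.hasFDerivAt_integral_of_dominated_loc_of_lip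
    (F := F) (F' := F') (bound := fun _ => CL) (ball_mem_nhds z₀ hε) hFmeas hFint hF'meas
    (MeasureTheory.ae_of_all _ (fun θ _ => hlip θ)) intervalIntegrable_const
    (MeasureTheory.ae_of_all _ (fun θ _ => hdiff θ))
  -- identification with the Cauchy integral
  have hqK : ∀ z ∈ ball z₀ ε,
      dslope (fun ζ : ℂ => f (pr z + ζ • v)) 0 (t0 z)
        = (2 * Real.pi * I : ℂ)⁻¹ * ∫ θ in (0:ℝ)..2 * Real.pi, F z θ := by
    intro z hz
    have hgd : Differentiable ℂ (fun ζ : ℂ => f (pr z + ζ • v)) :=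
      hf.comp ((differentiable_id.smul_const v).const_add (pr z))
    have hdsd : DifferentiableOn ℂ (dslope (fun ζ : ℂ => f (pr z + ζ • v)) 0) (closedBall 0 R) :=
      (Complex.differentiableOn_dslope (closedBall_mem_nhds 0 hR)).2 hgd.differentiableOn
    have ht0mem : t0 z ∈ ball (0:ℂ) R := by
      rw [mem_ball_zero_iff]; exact ht0R z hz
    have hcauchy := hdsd.circleIntegral_sub_inv_smul ht0mem
    have hint : (∮ ζ in C(0, R), (ζ - t0 z)⁻¹ • dslope (fun ζ : ℂ => f (pr z + ζ • v)) 0 ζ)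
        = ∫ θ in (0:ℝ)..2 * Real.pi, F z θ := by
      rw [circleIntegral]
      apply intervalIntegral.integral_congr
      intro θ hθ
      have hζ0 : circleMap 0 R θ ≠ 0 := circleMap_ne_center (ne_of_gt hR)
      show deriv (circleMap 0 R) θ •
          (circleMap 0 R θ - t0 z)⁻¹ • dslope (fun ζ : ℂ => f (pr z + ζ • v)) 0 (circleMap 0 R θ)
          = F z θ
      rw [deriv_circleMap, dslope_of_ne _ hζ0, slope_def_field]
      simp only [hFdef, sub_zero, zero_smul, add_zero, smul_eq_mul]
      rw [div_eq_mul_inv,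
        show circleMap 0 R θ * I * ((circleMap 0 R θ - t0 z)⁻¹ *
            ((f (pr z + circleMap 0 R θ • v) - f (pr z)) * (circleMap 0 R θ)⁻¹))
          = (circleMap 0 R θ * (circleMap 0 R θ)⁻¹) * (I * ((circleMap 0 R θ - t0 z)⁻¹ *
            (f (pr z + circleMap 0 R θ • v) - f (pr z)))) from by ring,
        mul_inv_cancel₀ hζ0, one_mul]
    rw [hint, smul_eq_mul] at hcauchy
    have h2pi : (2 * Real.pi * I : ℂ) ≠ 0 := by
      simp [Real.pi_ne_zero, I_ne_zero]
    rw [hcauchy, ← mul_assoc, inv_mul_cancel₀ h2pi, one_mul]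
  have hev : (fun z => dslope (fun ζ : ℂ => f (pr z + ζ • v)) 0 (t0 z)) =ᶠ[𝓝 z₀]
      fun z => (2 * Real.pi * I : ℂ)⁻¹ * ∫ θ in (0:ℝ)..2 * Real.pi, F z θ :=
    eventuallyEq_of_mem (ball_mem_nhds z₀ hε) (fun z hz => hqK z hz)
  exact DifferentiableAt.congr_of_eventuallyEq (hK.differentiableAt.const_mul _) hev

/-- Fischer pair for a degree-one polynomial: if P1(z) = Σ c_i z_i is a nonzero
linear form and P0 a constant, then every entire function f on C^d decomposes
uniquely as f = (P1 - P0) q + r with q, r entire and P1*(D) r = 0. -/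
theorem stmt18 {d : ℕ} (c : Fin d → ℂ) (hc : c ≠ 0) (P0 : ℂ)
    (f : (Fin d → ℂ) → ℂ) (hf : Differentiable ℂ f) :
    ∃! qr : ((Fin d → ℂ) → ℂ) × ((Fin d → ℂ) → ℂ),
      Differentiable ℂ qr.1 ∧ Differentiable ℂ qr.2 ∧
      (∀ z, f z = ((∑ i, c i * z i) - P0) * qr.1 z + qr.2 z) ∧
      (∀ z, ∑ i, (starRingEnd ℂ) (c i) * fderiv ℂ qr.2 z (Pi.single i 1) = 0) := by
  classical
  set Lc : (Fin d → ℂ) →L[ℂ] ℂ := ∑ i, c i • ContinuousLinearMap.proj i with hLcdef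
  have hLc : ∀ z, Lc z = ∑ i, c i * z i := by
    intro z
    simp [hLcdef, ContinuousLinearMap.sum_apply]
  set v : Fin d → ℂ := fun i => (starRingEnd ℂ) (c i) with hvdef
  set N : ℂ := ∑ i, c i * (starRingEnd ℂ) (c i) with hNdef
  have hNv : Lc v = N := hLc v
  have hN : N ≠ 0 := by
    have hNr : N = ((∑ i, Complex.normSq (c i) : ℝ) : ℂ) := by
      rw [hNdef]; push_cast; exact Finset.sum_congr rfl fun i _ => (Complex.mul_conj (c i))
    rw [hNr, Complex.ofReal_ne_zero]
    obtain ⟨i, hi⟩ : ∃ i, c i ≠ 0 := by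
      by_contra h; push_neg at h; exact hc (funext h)
    exact ne_of_gt (Finset.sum_pos' (fun j _ => Complex.normSq_nonneg _)
      ⟨i, Finset.mem_univ i, Complex.normSq_pos.2 hi⟩)
  set T0 : (Fin d → ℂ) →L[ℂ] ℂ := N⁻¹ • Lc with hT0def
  set t0 : (Fin d → ℂ) → ℂ := fun z => T0 z - P0/N with ht0def
  have ht0 : ∀ z, t0 z = (Lc z - P0)/N := by
    intro z; simp only [ht0def, hT0def, ContinuousLinearMap.smul_apply, smul_eq_mul]
    field_simp
  have hNt0 : ∀ z, N * t0 z = Lc z - P0 := by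
    intro z; rw [ht0]; field_simp
  set A : (Fin d → ℂ) →L[ℂ] (Fin d → ℂ) :=
    ContinuousLinearMap.id ℂ _ - ContinuousLinearMap.smulRight T0 v with hAdef
  have hAap : ∀ z, A z = z - T0 z • v := by
    intro z; simp [hAdef]
  have hAv : A v = 0 := by
    rw [hAap]
    have : T0 v = 1 := by
      simp only [hT0def, ContinuousLinearMap.smul_apply, smul_eq_mul, hNv]
      exact inv_mul_cancel₀ hN
    rw [this, one_smul, sub_self]
  set b0 : Fin d → ℂ := (P0/N) • v with hb0def
  set pr : (Fin d → ℂ) → (Fin d → ℂ) := fun z => A z + b0 with hprdef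
  have hpr : ∀ z t, pr z + t • v = z + (t - t0 z) • v := by
    intro z t
    simp only [hprdef, hb0def, hAap, ht0def]
    module
  have hprz : ∀ z, pr z + t0 z • v = z := by
    intro z; rw [hpr]; simp
  have hprA : ∀ z, HasFDerivAt pr A z := fun z => A.hasFDerivAt.add_const b0
  have hprd : Differentiable ℂ pr := fun z => (hprA z).differentiableAt
  have hLpr : ∀ z, Lc (pr z) = P0 := by
    intro z
    have h1 := congrArg Lc (hprz z)
    rw [map_add, _root_.map_smul, smul_eq_mul, hNv] at h1
    have h2 := hNt0 z
    have : Lc (pr z) = Lc z - t0 z * N := by linear_combination h1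
    rw [this]; linear_combination -h2
  set r : (Fin d → ℂ) → ℂ := fun z => f (pr z) with hrdef
  set q : (Fin d → ℂ) → ℂ :=
    fun z => N⁻¹ * dslope (fun ζ => f (pr z + ζ • v)) 0 (t0 z) with hqdef
  have hrd : Differentiable ℂ r := hf.comp hprd
  have hrD : ∀ z, fderiv ℂ r z = (fderiv ℂ f (pr z)).comp A := by
    intro z
    exact (hf.differentiableAt.hasFDerivAt.comp z (hprA z)).fderiv
  have hsum : ∀ (g : (Fin d → ℂ) → ℂ) (z : Fin d → ℂ),
      (∑ i, (starRingEnd ℂ) (c i) * fderiv ℂ g z (Pi.single i 1)) = fderiv ℂ g z v := by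
    intro g z
    have hv : v = ∑ i, (starRingEnd ℂ) (c i) • (Pi.single i (1:ℂ) : Fin d → ℂ) := by
      ext j
      rw [Finset.sum_apply]
      simp [Pi.single_apply, hvdef]
    rw [hv, map_sum]
    exact Finset.sum_congr rfl fun i _ => by rw [_root_.map_smul, smul_eq_mul]
  -- decomposition identity
  have hdec : ∀ z, f z = (Lc z - P0) * q z + r z := by
    intro z
    rcases eq_or_ne (t0 z) 0 with h | h
    · have h1 : Lc z - P0 = 0 := by rw [← hNt0 z, h, mul_zero]
      have h2 : pr z = z := by
        have := hprz z; rwa [h, zero_smul, add_zero] at this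
      have hrz : r z = f z := by show f (pr z) = f z; rw [h2]
      rw [h1, zero_mul, zero_add, hrz]
    · have hds := dslope_of_ne (fun ζ => f (pr z + ζ • v)) h
      have hq : q z = N⁻¹ * ((f z - r z) / t0 z) := by
        show N⁻¹ * dslope (fun ζ => f (pr z + ζ • v)) 0 (t0 z) = N⁻¹ * ((f z - r z) / t0 z)
        rw [hds, slope_def_field, hprz z]
        norm_num
        exact Or.inl rfl
      rw [hq, ← hNt0 z]
      field_simp
      ring
  -- kernel property of r
  have hker : ∀ z, fderiv ℂ r z v = 0 := by
    intro z
    rw [hrD z, ContinuousLinearMap.comp_apply, hAv, map_zero]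
  -- differentiability of q
  have hqd : Differentiable ℂ q :=
    (aux_qdiff hf v b0 T0 A (P0/N)).const_mul N⁻¹
  -- continuity facts used for uniqueness
  refine ⟨(q, r), ⟨hqd, hrd, ?_, ?_⟩, ?_⟩
  · intro z
    have := hdec z
    rwa [hLc z] at this
  · intro z
    rw [hsum r z]
    exact hker z
  · rintro ⟨q', r'⟩ ⟨hq'd, hr'd, hdec', hker'⟩
    have hker'' : ∀ z, fderiv ℂ r' z v = 0 := by
      intro z
      rw [← hsum r' z]
      exact hker' z
    have hdec'' : ∀ z, f z = (Lc z - P0) * q' z + r' z := by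
      intro z; rw [hLc z]; exact hdec' z
    -- r' is constant along v
    have hconst : ∀ w : Fin d → ℂ, ∀ t : ℂ, r' (w + t • v) = r' w := by
      intro w t
      set ψ : ℂ → ℂ := fun s => r' (w + s • v) with hψdef
      have hψd : Differentiable ℂ ψ :=
        hr'd.comp ((differentiable_id.smul_const v).const_add w)
      have hder0 : ∀ s, deriv ψ s = 0 := by
        intro s
        have h1 : HasDerivAt (fun s : ℂ => w + s • v) v s := by
          simpa using ((hasDerivAt_id s).smul_const v).const_add w
        have h2 : HasDerivAt ψ (fderiv ℂ r' (w + s • v) v) s :=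
          (hr'd _).hasFDerivAt.comp_hasDerivAt s h1
        rw [hker''] at h2
        exact h2.deriv
      have := is_const_of_deriv_eq_zero hψd hder0 t 0
      simpa [hψdef] using this
    have hr'r : r' = r := by
      funext z
      have h1 : r' z = r' (pr z) := by
        conv_lhs => rw [← hprz z]
        exact hconst (pr z) (t0 z)
      have h2 : r' (pr z) = f (pr z) := by
        have := hdec'' (pr z)
        rw [hLpr z, sub_self, zero_mul, zero_add] at this
        exact this.symm
      rw [h1, h2, hrdef]
    have hq'q : q' = q := by
      have hne : ∀ z, Lc z ≠ P0 → q' z = q z := by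
        intro z hz
        have h1 := hdec'' z
        rw [hr'r] at h1
        have h2 := hdec z
        have h3 : (Lc z - P0) * q' z = (Lc z - P0) * q z :=
          add_right_cancel (h1.symm.trans h2)
        exact mul_left_cancel₀ (sub_ne_zero.2 hz) h3
      funext z
      rcases eq_or_ne (Lc z) P0 with h | h
      · -- limit along the direction v
        have hco : Continuous fun t : ℂ => z + t • v :=
          continuous_const.add (continuous_id.smul continuous_const)
        have l1 : Filter.Tendsto (fun t : ℂ => q' (z + t • v)) (𝓝[≠] (0:ℂ)) (𝓝 (q' z)) := by
          have := (hq'd.continuous.comp hco).tendsto (0:ℂ)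
          simp only [Function.comp_def, zero_smul, add_zero] at this
          exact this.mono_left nhdsWithin_le_nhds
        have l2 : Filter.Tendsto (fun t : ℂ => q (z + t • v)) (𝓝[≠] (0:ℂ)) (𝓝 (q z)) := by
          have := (hqd.continuous.comp hco).tendsto (0:ℂ)
          simp only [Function.comp_def, zero_smul, add_zero] at this
          exact this.mono_left nhdsWithin_le_nhds
        have hev : ∀ᶠ t in 𝓝[≠] (0:ℂ), q' (z + t • v) = q (z + t • v) := by
          filter_upwards [self_mem_nhdsWithin] with t ht
          apply hne
          have hL : Lc (z + t • v) = P0 + t * N := by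
            rw [map_add, _root_.map_smul, smul_eq_mul, hNv, h]
          rw [hL]
          intro hh
          have htN : t * N = 0 := by linear_combination hh
          rcases mul_eq_zero.1 htN with h' | h'
          · exact ht h'
          · exact hN h'
        exact tendsto_nhds_unique (l1.congr' hev) l2
      · exact hne z h
    rw [Prod.ext_iff]
    exact ⟨hq'q, hr'r⟩
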